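/- In the repeated Stackelberg game with costly resources, let ℓ_{L,t}(x,λ) = f_t(x) − ⟨λ, xᵀC_t⟩ for every leader strategy x ∈ X = Δ(A_L), dual λ ∈ ℝ^m_{≥0}, follower type k_t, and cost matrix C_t. Then for every horizon τ ∈ [T], every sequence of follower types (k_t)_{t=1}^τ, every sequence of cost matrices (C_t)_{t=1}^τ, and every sequence (λ_t)_{t=1}^τ, it holds that max over x* in the finite set X* of Σ_{t=1}^τ ℓ_{L,t}(x*, λ_t) equals max over x ∈ X of Σ_{t=1}^τ ℓ_{L,t}(x, λ_t). -/

import Mathlib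

open MeasureTheory

noncomputable section

/-- The set of best responses of follower type `k` to leader strategy `x`. -/
def brSet {nL nF : ℕ} {K : Type*} (Uk : K → Fin nL → Fin nF → ℝ) (k : K)
    (x : Fin nL → ℝ) : Set (Fin nF) :=
  {a | ∀ a', ∑ j, x j * Uk k j a' ≤ ∑ j, x j * Uk k j a}

/-- The leader's reward against a follower of type `k`, with ties broken in favor of the
leader: `f(x) = max_{a best response of k to x} xᵀ U_L e_a`. -/
def leaderReward {nL nF : ℕ} {K : Type*} (Uk : K → Fin nL → Fin nF → ℝ)
    (UL : Fin nL → Fin nF → ℝ) (k : K) (x : Fin nL → ℝ) : ℝ :=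
  sSup ((fun a => ∑ j, x j * UL j a) '' brSet Uk k x)

/-- The polytope of leader strategies for which `avec k` is a best response of every type `k`. -/
def brPolytope {nL nF : ℕ} {K : Type*} (Uk : K → Fin nL → Fin nF → ℝ)
    (avec : K → Fin nF) : Set (Fin nL → ℝ) :=
  {x ∈ stdSimplex ℝ (Fin nL) | ∀ k, avec k ∈ brSet Uk k x}

/-- `X*`: the union, over tuples of follower actions (one per type), of the vertex sets
(extreme points) of the corresponding best-response polytopes. -/
def Xstar {nL nF : ℕ} {K : Type*} (Uk : K → Fin nL → Fin nF → ℝ) : Set (Fin nL → ℝ) :=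
  ⋃ avec : K → Fin nF, Set.extremePoints ℝ (brPolytope Uk avec)

section Aux
variable {nL nF : ℕ} {K : Type*}

lemma brSet_nonempty (hnF : 0 < nF) (Uk : K → Fin nL → Fin nF → ℝ) (k : K)
    (x : Fin nL → ℝ) : (brSet Uk k x).Nonempty := by
  obtain ⟨a, -, ha⟩ := Finset.exists_max_image Finset.univ
    (fun a => ∑ j, x j * Uk k j a) ⟨⟨0, hnF⟩, Finset.mem_univ _⟩
  exact ⟨a, fun a' => ha a' (Finset.mem_univ _)⟩

lemma leaderReward_isGreatest (hnF : 0 < nF) (Uk : K → Fin nL → Fin nF → ℝ)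
    (UL : Fin nL → Fin nF → ℝ) (k : K) (x : Fin nL → ℝ) :
    IsGreatest ((fun a => ∑ j, x j * UL j a) '' brSet Uk k x) (leaderReward Uk UL k x) := by
  have hfin : ((fun a => ∑ j, x j * UL j a) '' brSet Uk k x).Finite :=
    (Set.toFinite _).image _
  have hne : ((fun a => ∑ j, x j * UL j a) '' brSet Uk k x).Nonempty :=
    (brSet_nonempty hnF Uk k x).image _
  exact ⟨hne.csSup_mem hfin, fun y hy => le_csSup hfin.bddAbove hy⟩

lemma brPolytope_isClosed (Uk : K → Fin nL → Fin nF → ℝ) (avec : K → Fin nF) :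
    IsClosed (brPolytope Uk avec) := by
  have : brPolytope Uk avec = stdSimplex ℝ (Fin nL) ∩ ⋂ (k : K), ⋂ (a' : Fin nF),
      {x | ∑ j, x j * Uk k j a' ≤ ∑ j, x j * Uk k j (avec k)} := by
    ext x
    simp only [brPolytope, brSet, Set.mem_setOf_eq, Set.mem_inter_iff, Set.mem_iInter]
  rw [this]
  refine (isClosed_stdSimplex ℝ (Fin nL)).inter
    (isClosed_iInter fun k => isClosed_iInter fun a' => isClosed_le ?_ ?_) <;>
  exact continuous_finset_sum _ fun j _ => (continuous_apply j).mul continuous_const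

lemma brPolytope_isCompact (Uk : K → Fin nL → Fin nF → ℝ) (avec : K → Fin nF) :
    IsCompact (brPolytope Uk avec) :=
  (isCompact_stdSimplex ℝ _).of_isClosed_subset (brPolytope_isClosed Uk avec)
    (fun _ hx => hx.1)

lemma brPolytope_convex (Uk : K → Fin nL → Fin nF → ℝ) (avec : K → Fin nF) :
    Convex ℝ (brPolytope Uk avec) := by
  intro x hx y hy a b ha hb hab
  refine ⟨(convex_stdSimplex ℝ _) hx.1 hy.1 ha hb hab, fun k a' => ?_⟩
  have key : ∀ c : Fin nF, ∑ j, (a • x + b • y) j * Uk k j c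
      = a * ∑ j, x j * Uk k j c + b * ∑ j, y j * Uk k j c := by
    intro c
    simp [Pi.add_apply, Pi.smul_apply, smul_eq_mul, add_mul, Finset.sum_add_distrib,
      Finset.mul_sum, mul_assoc]
  rw [key, key]
  exact add_le_add (mul_le_mul_of_nonneg_left (hx.2 k a') ha)
    (mul_le_mul_of_nonneg_left (hy.2 k a') hb)

lemma exists_extremePoint_max (S : Set (Fin nL → ℝ)) (hScomp : IsCompact S)
    (hSne : S.Nonempty) (c : Fin nL → ℝ) :
    ∃ z ∈ Set.extremePoints ℝ S, ∀ y ∈ S, ∑ j, y j * c j ≤ ∑ j, z j * c j := by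
  classical
  let l : (Fin nL → ℝ) →L[ℝ] ℝ := ∑ j, c j • ContinuousLinearMap.proj j
  have hl : ∀ x : Fin nL → ℝ, l x = ∑ j, x j * c j := by
    intro x
    simp [l, ContinuousLinearMap.sum_apply, mul_comm]
  set B := {x ∈ S | ∀ y ∈ S, l y ≤ l x} with hB
  have hexp : IsExposed ℝ S B := fun _ => ⟨l, rfl⟩
  obtain ⟨z0, hz0S, hz0⟩ := hScomp.exists_isMaxOn hSne l.continuous.continuousOn
  have hBne : B.Nonempty := ⟨z0, hz0S, fun y hy => hz0 hy⟩
  have hBcomp : IsCompact B := hexp.isCompact hScomp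
  obtain ⟨z, hz⟩ := hBcomp.extremePoints_nonempty hBne
  refine ⟨z, hexp.isExtreme.extremePoints_subset_extremePoints hz, fun y hy => ?_⟩
  have hzB : z ∈ B := hz.1
  have := hzB.2 y hy
  rwa [hl, hl] at this

end Aux

theorem stackelberg_opt_on_vertices
    {nL nF m : ℕ} (hnL : 0 < nL) (hnF : 0 < nF)
    {K : Type*} [Fintype K] [Nonempty K]
    (Uk : K → Fin nL → Fin nF → ℝ) (UL : Fin nL → Fin nF → ℝ)
    (hUL01 : ∀ x ∈ stdSimplex ℝ (Fin nL), ∀ a, (∑ j, x j * UL j a) ∈ Set.Icc (0 : ℝ) 1)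
    (τ : ℕ) (k : ℕ → K) (Cmat : ℕ → Fin nL → Fin m → ℝ)
    (hC01 : ∀ t j i, Cmat t j i ∈ Set.Icc (0 : ℝ) 1)
    (lam : ℕ → Fin m → ℝ) (hlam : ∀ t i, 0 ≤ lam t i) :
    sSup {v : ℝ | ∃ x ∈ Xstar Uk, v = ∑ t ∈ Finset.range τ,
        (leaderReward Uk UL (k t) x - ∑ i, lam t i * ∑ j, x j * Cmat t j i)} =
    sSup {v : ℝ | ∃ x ∈ stdSimplex ℝ (Fin nL), v = ∑ t ∈ Finset.range τ,
        (leaderReward Uk UL (k t) x - ∑ i, lam t i * ∑ j, x j * Cmat t j i)} := by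
  classical
  set F : (Fin nL → ℝ) → ℝ := fun x => ∑ t ∈ Finset.range τ,
      (leaderReward Uk UL (k t) x - ∑ i, lam t i * ∑ j, x j * Cmat t j i) with hF
  show sSup {v : ℝ | ∃ x ∈ Xstar Uk, v = F x}
      = sSup {v : ℝ | ∃ x ∈ stdSimplex ℝ (Fin nL), v = F x}
  -- Xstar is contained in the simplex
  have hXsub : Xstar Uk ⊆ stdSimplex ℝ (Fin nL) := by
    intro z hz
    obtain ⟨avec, hz⟩ := Set.mem_iUnion.1 hz
    exact (extremePoints_subset hz).1
  -- F is bounded above by τ on the simplex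
  have hFle : ∀ x ∈ stdSimplex ℝ (Fin nL), F x ≤ τ := by
    intro x hx
    rw [hF]
    calc ∑ t ∈ Finset.range τ,
        (leaderReward Uk UL (k t) x - ∑ i, lam t i * ∑ j, x j * Cmat t j i)
        ≤ ∑ t ∈ Finset.range τ, (1 : ℝ) := by
          refine Finset.sum_le_sum fun t _ => ?_
          obtain ⟨a, -, ha⟩ := (leaderReward_isGreatest hnF Uk UL (k t) x).1
          have h1 : leaderReward Uk UL (k t) x ≤ 1 := by
            rw [← ha]; exact (hUL01 x hx a).2
          have h2 : (0 : ℝ) ≤ ∑ i, lam t i * ∑ j, x j * Cmat t j i := by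
            refine Finset.sum_nonneg fun i _ => mul_nonneg (hlam t i) ?_
            exact Finset.sum_nonneg fun j _ => mul_nonneg (hx.1 j) (hC01 t j i).1
          linarith
      _ = τ := by simp
  -- the key step: from any x in the simplex, reach a point of Xstar with larger F
  have key : ∀ x ∈ stdSimplex ℝ (Fin nL), ∃ z ∈ Xstar Uk, F x ≤ F z := by
    intro x hx
    have choice : ∀ k' : K, ∃ a, a ∈ brSet Uk k' x ∧
        leaderReward Uk UL k' x = ∑ j, x j * UL j a := by
      intro k'
      obtain ⟨a, haBR, hEq⟩ := (leaderReward_isGreatest hnF Uk UL k' x).1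
      exact ⟨a, haBR, hEq.symm⟩
    choose avec havec hval using choice
    have hxP : x ∈ brPolytope Uk avec := ⟨hx, fun k' => havec k'⟩
    set c : Fin nL → ℝ := fun j => ∑ t ∈ Finset.range τ,
        (UL j (avec (k t)) - ∑ i, lam t i * Cmat t j i) with hc
    have hlin : ∀ x' : Fin nL → ℝ, ∑ j, x' j * c j
        = ∑ t ∈ Finset.range τ, ((∑ j, x' j * UL j (avec (k t)))
            - ∑ i, lam t i * ∑ j, x' j * Cmat t j i) := by
      intro x'
      have swap : ∀ t, ∑ j, x' j * ∑ i, lam t i * Cmat t j i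
          = ∑ i, lam t i * ∑ j, x' j * Cmat t j i := by
        intro t
        simp_rw [Finset.mul_sum]
        rw [Finset.sum_comm]
        exact Finset.sum_congr rfl fun i _ => Finset.sum_congr rfl fun j _ => by ring
      calc ∑ j, x' j * c j
          = ∑ j, ∑ t ∈ Finset.range τ,
              (x' j * UL j (avec (k t)) - x' j * ∑ i, lam t i * Cmat t j i) := by
            refine Finset.sum_congr rfl fun j _ => ?_
            rw [hc]
            simp [Finset.mul_sum, mul_sub]
        _ = ∑ t ∈ Finset.range τ, ∑ j,
              (x' j * UL j (avec (k t)) - x' j * ∑ i, lam t i * Cmat t j i) :=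
            Finset.sum_comm
        _ = ∑ t ∈ Finset.range τ, ((∑ j, x' j * UL j (avec (k t)))
              - ∑ i, lam t i * ∑ j, x' j * Cmat t j i) := by
            refine Finset.sum_congr rfl fun t _ => ?_
            rw [Finset.sum_sub_distrib, swap t]
    have hFx : F x = ∑ j, x j * c j := by
      rw [hlin x, hF]
      exact Finset.sum_congr rfl fun t _ => by rw [hval (k t)]
    have hge : ∀ x' ∈ brPolytope Uk avec, ∑ j, x' j * c j ≤ F x' := by
      intro x' hx'
      rw [hlin x', hF]
      refine Finset.sum_le_sum fun t _ => ?_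
      have : (∑ j, x' j * UL j (avec (k t))) ≤ leaderReward Uk UL (k t) x' :=
        (leaderReward_isGreatest hnF Uk UL (k t) x').2 ⟨avec (k t), hx'.2 (k t), rfl⟩
      linarith
    obtain ⟨z, hzext, hzmax⟩ := exists_extremePoint_max (brPolytope Uk avec)
      (brPolytope_isCompact Uk avec) ⟨x, hxP⟩ c
    refine ⟨z, Set.mem_iUnion.2 ⟨avec, hzext⟩, ?_⟩
    calc F x = ∑ j, x j * c j := hFx
      _ ≤ ∑ j, z j * c j := hzmax x hxP
      _ ≤ F z := hge z (extremePoints_subset hzext)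
  -- nonemptiness and boundedness
  have hsimpne : (stdSimplex ℝ (Fin nL)).Nonempty := by
    refine ⟨fun j => if j = ⟨0, hnL⟩ then 1 else 0, fun j => ?_, ?_⟩
    · dsimp only; split <;> norm_num
    · simp
  obtain ⟨x0, hx0⟩ := hsimpne
  obtain ⟨z0, hz0X, -⟩ := key x0 hx0
  have hSXne : {v : ℝ | ∃ x ∈ Xstar Uk, v = F x}.Nonempty := ⟨F z0, z0, hz0X, rfl⟩
  have hSSne : {v : ℝ | ∃ x ∈ stdSimplex ℝ (Fin nL), v = F x}.Nonempty :=
    ⟨F x0, x0, hx0, rfl⟩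
  have hbddSS : BddAbove {v : ℝ | ∃ x ∈ stdSimplex ℝ (Fin nL), v = F x} := by
    refine ⟨τ, ?_⟩
    rintro v ⟨x, hx, rfl⟩
    exact hFle x hx
  have hbddSX : BddAbove {v : ℝ | ∃ x ∈ Xstar Uk, v = F x} := by
    refine ⟨τ, ?_⟩
    rintro v ⟨x, hx, rfl⟩
    exact hFle x (hXsub hx)
  apply le_antisymm
  · refine csSup_le_csSup hbddSS hSXne ?_
    rintro v ⟨x, hxX, rfl⟩
    exact ⟨x, hXsub hxX, rfl⟩
  · refine csSup_le hSSne ?_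
    rintro v ⟨x, hx, rfl⟩
    obtain ⟨z, hzX, hle⟩ := key x hx
    exact le_trans hle (le_csSup hbddSX ⟨z, hzX, rfl⟩)
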